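/- Let (x*, y*) be the unconstrained solution and (x_p*, y_p*) ∈ X × Y the constrained solution. Suppose U_Xᵀ A_ff U_X and U_Yᵀ A_ss U_Y are invertible, set c1 := U_X (U_Xᵀ A_ff U_X)^{-1} U_Xᵀ, c5 := U_Y (U_Yᵀ A_ss U_Y)^{-1} U_Yᵀ, m_x := σ_min(U_Xᵀ A_ff U_X), m̃_y := σ_min(U_Yᵀ A_ss U_Y), and suppose I − c5 A_sf c1 A_fs is invertible with κ' := ‖(I − c5 A_sf c1 A_fs)^{-1}‖₂. Then y_p* − y* = (I − c5 A_sf c1 A_fs)^{-1}[(I − c5 A_ss)(Π_Y y* − y*) − c5 A_sf (I − c1 A_ff)(Π_X x* − x*)], and consequently ‖y_p* − y*‖² ≤ 2κ'²(1 + ‖A_ss‖₂/m̃_y)² ε_y² + 2κ'²(‖A_sf‖₂/m̃_y)²(1 + ‖A_ff‖₂/m_x)² ε_x², where ε_x := ‖Π_X x* − x*‖ and ε_y := ‖Π_Y y* − y*‖. -/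

import Mathlib

open Matrix MeasureTheory Finset
open scoped BigOperators
open scoped RealInnerProductSpace

noncomputable section
namespace TTSA

abbrev E (n : ℕ) : Type := EuclideanSpace ℝ (Fin n)

def mv {k l : ℕ} (M : Matrix (Fin k) (Fin l) ℝ) (x : E l) : E k :=
  Matrix.toEuclideanLin M x

def specNorm {k l : ℕ} (M : Matrix (Fin k) (Fin l) ℝ) : ℝ :=
  ‖LinearMap.toContinuousLinearMap (Matrix.toEuclideanLin M)‖

def sigmaMin {k : ℕ} (M : Matrix (Fin k) (Fin k) ℝ) : ℝ :=
  sInf ((fun v : E k => ‖mv M v‖) '' {v | ‖v‖ = 1})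

def resolvent {k l : ℕ} (U : Matrix (Fin k) (Fin l) ℝ) (A : Matrix (Fin k) (Fin k) ℝ) :
    Matrix (Fin k) (Fin k) ℝ :=
  U * (Uᵀ * A * U)⁻¹ * Uᵀ

lemma mv_add {k l : ℕ} (M : Matrix (Fin k) (Fin l) ℝ) (x y : E l) :
    mv M (x + y) = mv M x + mv M y := map_add _ _ _

lemma mv_sub {k l : ℕ} (M : Matrix (Fin k) (Fin l) ℝ) (x y : E l) :
    mv M (x - y) = mv M x - mv M y := map_sub _ _ _

lemma mv_smul {k l : ℕ} (M : Matrix (Fin k) (Fin l) ℝ) (c : ℝ) (x : E l) :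
    mv M (c • x) = c • mv M x := map_smul _ _ _

lemma mv_zero {k l : ℕ} (M : Matrix (Fin k) (Fin l) ℝ) : mv M (0 : E l) = 0 :=
  map_zero (Matrix.toEuclideanLin M)

lemma mv_mul {k l p : ℕ} (M : Matrix (Fin k) (Fin l) ℝ) (N : Matrix (Fin l) (Fin p) ℝ)
    (x : E p) : mv (M * N) x = mv M (mv N x) := by
  simp [mv, Matrix.toEuclideanLin_apply, Matrix.mulVec_mulVec]

lemma mv_one {k : ℕ} (x : E k) : mv (1 : Matrix (Fin k) (Fin k) ℝ) x = x := by
  simp [mv, Matrix.toEuclideanLin_apply, Matrix.one_mulVec]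

lemma mv_matsub {k l : ℕ} (M N : Matrix (Fin k) (Fin l) ℝ) (x : E l) :
    mv (M - N) x = mv M x - mv N x := by
  simp [mv, map_sub]

lemma norm_mv_le {k l : ℕ} (M : Matrix (Fin k) (Fin l) ℝ) (x : E l) :
    ‖mv M x‖ ≤ specNorm M * ‖x‖ :=
  (LinearMap.toContinuousLinearMap (Matrix.toEuclideanLin M)).le_opNorm x

lemma specNorm_nonneg {k l : ℕ} (M : Matrix (Fin k) (Fin l) ℝ) : 0 ≤ specNorm M :=
  norm_nonneg _

lemma specNorm_le_bound {k l : ℕ} (M : Matrix (Fin k) (Fin l) ℝ) {c : ℝ} (hc : 0 ≤ c)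
    (h : ∀ x : E l, ‖mv M x‖ ≤ c * ‖x‖) : specNorm M ≤ c :=
  ContinuousLinearMap.opNorm_le_bound _ hc h

lemma inner_mv {k l : ℕ} (M : Matrix (Fin k) (Fin l) ℝ) (x : E l) (y : E k) :
    ⟪mv M x, y⟫ = ⟪x, mv Mᵀ y⟫ := by
  have h : Mᵀ = Mᴴ := by ext i j; simp [Matrix.conjTranspose_apply]
  rw [mv, mv, h, Matrix.toEuclideanLin_conjTranspose_eq_adjoint]
  exact (LinearMap.adjoint_inner_right _ _ _).symm

lemma norm_mv_orth {k l : ℕ} (U : Matrix (Fin k) (Fin l) ℝ) (hU : Uᵀ * U = 1) (w : E l) :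
    ‖mv U w‖ = ‖w‖ := by
  have h : ‖mv U w‖ ^ 2 = ‖w‖ ^ 2 := by
    rw [← real_inner_self_eq_norm_sq, ← real_inner_self_eq_norm_sq, inner_mv, ← mv_mul, hU,
      mv_one]
  exact (sq_eq_sq₀ (norm_nonneg _) (norm_nonneg _)).mp h

lemma norm_mvT_le {k l : ℕ} (U : Matrix (Fin k) (Fin l) ℝ) (hU : Uᵀ * U = 1) (v : E k) :
    ‖mv Uᵀ v‖ ≤ ‖v‖ := by
  have h2 : ‖mv Uᵀ v‖ ^ 2 ≤ ‖mv Uᵀ v‖ * ‖v‖ := by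
    calc ‖mv Uᵀ v‖ ^ 2 = ⟪mv Uᵀ v, mv Uᵀ v⟫ := (real_inner_self_eq_norm_sq _).symm
      _ = ⟪mv U (mv Uᵀ v), v⟫ := (inner_mv U _ v).symm
      _ ≤ ‖mv U (mv Uᵀ v)‖ * ‖v‖ := real_inner_le_norm _ _
      _ = ‖mv Uᵀ v‖ * ‖v‖ := by rw [norm_mv_orth U hU]
  nlinarith [norm_nonneg (mv Uᵀ v), norm_nonneg v]

lemma sigmaMin_nonneg {k : ℕ} (M : Matrix (Fin k) (Fin k) ℝ) : 0 ≤ sigmaMin M :=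
  Real.sInf_nonneg (by rintro x ⟨v, -, rfl⟩; exact norm_nonneg _)

lemma sigmaMin_mul_norm_le {k : ℕ} (M : Matrix (Fin k) (Fin k) ℝ) (v : E k) :
    sigmaMin M * ‖v‖ ≤ ‖mv M v‖ := by
  rcases eq_or_ne v 0 with rfl | hv
  · simp [mv_zero]
  · have hv' : ‖v‖ ≠ 0 := norm_ne_zero_iff.mpr hv
    have hu : ‖(‖v‖⁻¹ • v : E k)‖ = 1 := by
      rw [norm_smul, norm_inv, norm_norm, inv_mul_cancel₀ hv']
    have hle : sigmaMin M ≤ ‖mv M (‖v‖⁻¹ • v)‖ :=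
      csInf_le ⟨0, by rintro x ⟨w, -, rfl⟩; exact norm_nonneg _⟩ ⟨_, hu, rfl⟩
    rw [mv_smul, norm_smul, norm_inv, norm_norm] at hle
    have := mul_le_mul_of_nonneg_right hle (norm_nonneg v)
    calc sigmaMin M * ‖v‖ ≤ ‖v‖⁻¹ * ‖mv M v‖ * ‖v‖ := this
      _ = ‖mv M v‖ := by field_simp

lemma specNorm_resolvent_le {k l : ℕ} (U : Matrix (Fin k) (Fin l) ℝ)
    (A : Matrix (Fin k) (Fin k) ℝ) (hU : Uᵀ * U = 1) (hA : IsUnit (Uᵀ * A * U)) :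
    specNorm (resolvent U A) ≤ 1 / sigmaMin (Uᵀ * A * U) := by
  rcases Nat.eq_zero_or_pos l with rfl | hl
  · have hres : resolvent U A = 0 := by
      ext i j
      simp [resolvent, Matrix.mul_apply]
    have hset : {v : E 0 | ‖v‖ = 1} = ∅ := by
      ext v
      simp [Subsingleton.elim v 0]
    have hsig : sigmaMin (Uᵀ * A * U) = 0 := by
      simp [sigmaMin, hset, Real.sInf_empty]
    have hz : specNorm (0 : Matrix (Fin k) (Fin k) ℝ) = 0 := by
      rw [specNorm, map_zero, map_zero, norm_zero]
    rw [hres, hsig, hz]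
    norm_num
  · have hdet := (Matrix.isUnit_iff_isUnit_det _).mp hA
    have hBB : (Uᵀ * A * U) * (Uᵀ * A * U)⁻¹ = 1 := Matrix.mul_nonsing_inv _ hdet
    have hBB' : (Uᵀ * A * U)⁻¹ * (Uᵀ * A * U) = 1 := Matrix.nonsing_inv_mul _ hdet
    have hexists : ∃ v : E l, ‖v‖ = 1 := ⟨EuclideanSpace.single ⟨0, hl⟩ 1, by simp⟩
    set B := Uᵀ * A * U with hB
    set c := specNorm B⁻¹ with hc
    have hkey : ∀ v : E l, ‖v‖ = 1 → 1 ≤ c * ‖mv B v‖ := by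
      intro v hv
      have hvv : v = mv B⁻¹ (mv B v) := by rw [← mv_mul, hBB', mv_one]
      calc (1 : ℝ) = ‖v‖ := hv.symm
        _ = ‖mv B⁻¹ (mv B v)‖ := by rw [← hvv]
        _ ≤ c * ‖mv B v‖ := norm_mv_le _ _
    have hcpos : 0 < c := by
      obtain ⟨v, hv⟩ := hexists
      nlinarith [hkey v hv, norm_nonneg (mv B v), specNorm_nonneg (B⁻¹)]
    have hsigpos : 0 < sigmaMin B := by
      have h1c : 1 / c ≤ sigmaMin B := by
        apply le_csInf
        · obtain ⟨v, hv⟩ := hexists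
          exact ⟨_, ⟨v, hv, rfl⟩⟩
        · rintro x ⟨v, hv, rfl⟩
          rw [div_le_iff₀ hcpos]
          calc (1 : ℝ) ≤ c * ‖mv B v‖ := hkey v hv
            _ = ‖mv B v‖ * c := mul_comm _ _
      linarith [div_pos one_pos hcpos]
    apply specNorm_le_bound _ (by positivity)
    intro v
    have hval : mv (resolvent U A) v = mv U (mv B⁻¹ (mv Uᵀ v)) := by
      rw [resolvent, mv_mul, mv_mul]
    set w := mv B⁻¹ (mv Uᵀ v) with hw
    have h1 : ‖mv (resolvent U A) v‖ = ‖w‖ := by rw [hval, norm_mv_orth U hU]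
    have h2 : sigmaMin B * ‖w‖ ≤ ‖mv B w‖ := sigmaMin_mul_norm_le B w
    have h3 : mv B w = mv Uᵀ v := by rw [hw, ← mv_mul, hBB, mv_one]
    have h4 : ‖mv Uᵀ v‖ ≤ ‖v‖ := norm_mvT_le U hU v
    rw [h1]
    rw [div_mul_eq_mul_div, le_div_iff₀ hsigpos]
    rw [h3] at h2
    nlinarith

lemma res_mul_self {k l : ℕ} (U : Matrix (Fin k) (Fin l) ℝ) (A : Matrix (Fin k) (Fin k) ℝ)
    (hU : Uᵀ * U = 1) : resolvent U A * U = U * (Uᵀ * A * U)⁻¹ := by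
  rw [resolvent, Matrix.mul_assoc (U * (Uᵀ * A * U)⁻¹), hU, Matrix.mul_one]

lemma res_mul_proj {k l : ℕ} (U : Matrix (Fin k) (Fin l) ℝ) (A : Matrix (Fin k) (Fin k) ℝ)
    (hU : Uᵀ * U = 1) : resolvent U A * (U * Uᵀ) = resolvent U A := by
  rw [← Matrix.mul_assoc, res_mul_self U A hU, resolvent]

lemma res_mul_A_mul {k l : ℕ} (U : Matrix (Fin k) (Fin l) ℝ) (A : Matrix (Fin k) (Fin k) ℝ)
    (hA : IsUnit (Uᵀ * A * U)) : resolvent U A * A * U = U := by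
  have hdet := (Matrix.isUnit_iff_isUnit_det _).mp hA
  rw [resolvent, Matrix.mul_assoc (U * (Uᵀ * A * U)⁻¹), Matrix.mul_assoc (U * (Uᵀ * A * U)⁻¹),
    Matrix.mul_assoc U _ (Uᵀ * A * U), Matrix.nonsing_inv_mul _ hdet,
    Matrix.mul_one]

lemma norm_mv_one_sub_res {k l : ℕ} (U : Matrix (Fin k) (Fin l) ℝ)
    (A : Matrix (Fin k) (Fin k) ℝ) (hU : Uᵀ * U = 1) (hA : IsUnit (Uᵀ * A * U)) (x : E k) :
    ‖mv (1 - resolvent U A * A) x‖ ≤ (1 + specNorm A / sigmaMin (Uᵀ * A * U)) * ‖x‖ := by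
  have hres := specNorm_resolvent_le U A hU hA
  have hσ := sigmaMin_nonneg (Uᵀ * A * U)
  have h1 : mv (1 - resolvent U A * A) x = x - mv (resolvent U A) (mv A x) := by
    rw [mv_matsub, mv_one, mv_mul]
  have h2 : ‖mv (resolvent U A) (mv A x)‖ ≤ 1 / sigmaMin (Uᵀ * A * U) * (specNorm A * ‖x‖) := by
    calc ‖mv (resolvent U A) (mv A x)‖ ≤ specNorm (resolvent U A) * ‖mv A x‖ := norm_mv_le _ _
      _ ≤ 1 / sigmaMin (Uᵀ * A * U) * (specNorm A * ‖x‖) :=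
        mul_le_mul hres (norm_mv_le _ _) (norm_nonneg _) (by positivity)
  rw [h1]
  calc ‖x - mv (resolvent U A) (mv A x)‖ ≤ ‖x‖ + ‖mv (resolvent U A) (mv A x)‖ :=
      norm_sub_le _ _
    _ ≤ ‖x‖ + 1 / sigmaMin (Uᵀ * A * U) * (specNorm A * ‖x‖) := by linarith
    _ = (1 + specNorm A / sigmaMin (Uᵀ * A * U)) * ‖x‖ := by ring

set_option maxHeartbeats 1000000 in
/-- closed-form approximation error for the slow component after
eliminating the cross-term, and the resulting bound in terms of the
best-approximation errors `ε_x = ‖Π_X x* - x*‖`, `ε_y = ‖Π_Y y* - y*‖`.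
Here `c1 = resolvent U_X A_ff`, `c5 = resolvent U_Y A_ss`,
`m_x = σ_min(U_Xᵀ A_ff U_X)`, `m̃_y = σ_min(U_Yᵀ A_ss U_Y)`, and
`κ' = ‖(I - c5 A_sf c1 A_fs)⁻¹‖₂`. -/
theorem slow_approximation_error_bound {n m d r : ℕ}
    (Aff : Matrix (Fin n) (Fin n) ℝ) (Afs : Matrix (Fin n) (Fin m) ℝ)
    (Asf : Matrix (Fin m) (Fin n) ℝ) (Ass : Matrix (Fin m) (Fin m) ℝ)
    (b1 : E n) (b2 : E m)
    (UX : Matrix (Fin n) (Fin d) ℝ) (UY : Matrix (Fin m) (Fin r) ℝ)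
    (hUX : UXᵀ * UX = 1) (hUY : UYᵀ * UY = 1)
    (xs : E n) (ys : E m)
    (hxs : mv Aff xs + mv Afs ys = b1) (hys : mv Asf xs + mv Ass ys = b2)
    (xp : E n) (yp : E m)
    (hxp : xp ∈ Set.range (mv UX)) (hyp : yp ∈ Set.range (mv UY))
    (hsolx : mv (UX * UXᵀ) (mv Aff xp + mv Afs yp - b1) = 0)
    (hsoly : mv (UY * UYᵀ) (mv Asf xp + mv Ass yp - b2) = 0)
    (h1 : IsUnit (UXᵀ * Aff * UX)) (h5 : IsUnit (UYᵀ * Ass * UY))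
    (hcoup : IsUnit ((1 : Matrix (Fin m) (Fin m) ℝ) -
      resolvent UY Ass * Asf * resolvent UX Aff * Afs)) :
    yp - ys =
      mv ((1 - resolvent UY Ass * Asf * resolvent UX Aff * Afs)⁻¹)
        (mv (1 - resolvent UY Ass * Ass) (mv (UY * UYᵀ) ys - ys) -
         mv (resolvent UY Ass * Asf * (1 - resolvent UX Aff * Aff))
           (mv (UX * UXᵀ) xs - xs)) ∧
    ‖yp - ys‖ ^ 2 ≤
      2 * specNorm ((1 - resolvent UY Ass * Asf * resolvent UX Aff * Afs)⁻¹) ^ 2 *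
        (1 + specNorm Ass / sigmaMin (UYᵀ * Ass * UY)) ^ 2 *
        ‖mv (UY * UYᵀ) ys - ys‖ ^ 2 +
      2 * specNorm ((1 - resolvent UY Ass * Asf * resolvent UX Aff * Afs)⁻¹) ^ 2 *
        (specNorm Asf / sigmaMin (UYᵀ * Ass * UY)) ^ 2 *
        (1 + specNorm Aff / sigmaMin (UXᵀ * Aff * UX)) ^ 2 *
        ‖mv (UX * UXᵀ) xs - xs‖ ^ 2 := by
  have hdc := (Matrix.isUnit_iff_isUnit_det _).mp hcoup
  obtain ⟨z, hz⟩ := hxp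
  obtain ⟨w, hw⟩ := hyp
  -- abbreviations
  set c1 := resolvent UX Aff with hc1def
  set c5 := resolvent UY Ass with hc5def
  -- vector-level projection identities
  have k1 : ∀ v : E n, mv c1 (mv UX (mv UXᵀ v)) = mv c1 v := by
    intro v
    rw [← mv_mul, ← mv_mul]
    congr 1
    rw [hc1def, Matrix.mul_assoc, res_mul_proj UX Aff hUX]
  have k1' : ∀ v : E m, mv c5 (mv UY (mv UYᵀ v)) = mv c5 v := by
    intro v
    rw [← mv_mul, ← mv_mul]
    congr 1
    rw [hc5def, Matrix.mul_assoc, res_mul_proj UY Ass hUY]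
  have k2 : ∀ v : E d, mv c1 (mv Aff (mv UX v)) = mv UX v := by
    intro v
    rw [← mv_mul, ← mv_mul]
    congr 1
    rw [hc1def, res_mul_A_mul UX Aff h1]
  have k2' : ∀ v : E r, mv c5 (mv Ass (mv UY v)) = mv UY v := by
    intro v
    rw [← mv_mul, ← mv_mul]
    congr 1
    rw [hc5def, res_mul_A_mul UY Ass h5]
  -- solve for xp and yp
  have hxpe : xp = mv c1 (mv Aff xs + mv Afs ys) - mv c1 (mv Afs yp) := by
    have h := congrArg (mv c1) hsolx
    rw [mv_zero, mv_mul, k1, mv_sub, mv_add, ← hz, k2, hz, ← hxs] at h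
    have h' := sub_eq_zero.mp h
    rw [← h']
    abel
  have hype : yp = mv c5 (mv Asf xs + mv Ass ys) - mv c5 (mv Asf xp) := by
    have h := congrArg (mv c5) hsoly
    rw [mv_zero, mv_mul, k1', mv_sub, mv_add, ← hw, k2', hw, ← hys] at h
    have h' := sub_eq_zero.mp h
    rw [← h']
    abel
  rw [hxpe] at hype
  -- the separated relation for yp
  have hS : yp - mv c5 (mv Asf (mv c1 (mv Afs yp))) =
      mv c5 (mv Asf xs) + mv c5 (mv Ass ys) - mv c5 (mv Asf (mv c1 (mv Aff xs))) -
        mv c5 (mv Asf (mv c1 (mv Afs ys))) := by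
    nth_rewrite 1 [hype]
    simp only [mv_add, mv_sub]
    abel
  -- main identity before inversion
  have hmain : mv (1 - c5 * Asf * c1 * Afs) (yp - ys) =
      mv (1 - c5 * Ass) (mv (UY * UYᵀ) ys - ys) -
        mv (c5 * Asf * (1 - c1 * Aff)) (mv (UX * UXᵀ) xs - xs) := by
    simp only [mv_matsub, mv_mul, mv_one, mv_add, mv_sub, k2, k2']
    rw [← sub_eq_zero]
    have h0 : yp - mv c5 (mv Asf (mv c1 (mv Afs yp))) -
        (mv c5 (mv Asf xs) + mv c5 (mv Ass ys) - mv c5 (mv Asf (mv c1 (mv Aff xs))) -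
          mv c5 (mv Asf (mv c1 (mv Afs ys)))) = 0 := sub_eq_zero.mpr hS
    rw [← h0]
    abel
  have hKinv : (1 - c5 * Asf * c1 * Afs)⁻¹ * (1 - c5 * Asf * c1 * Afs) = 1 :=
    Matrix.nonsing_inv_mul _ hdc
  have hpart1 : yp - ys =
      mv ((1 - c5 * Asf * c1 * Afs)⁻¹)
        (mv (1 - c5 * Ass) (mv (UY * UYᵀ) ys - ys) -
          mv (c5 * Asf * (1 - c1 * Aff)) (mv (UX * UXᵀ) xs - xs)) := by
    have h := congrArg (mv ((1 - c5 * Asf * c1 * Afs)⁻¹)) hmain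
    rwa [← mv_mul, hKinv, mv_one] at h
  refine ⟨hpart1, ?_⟩
  -- norm bound
  set K := (1 - c5 * Asf * c1 * Afs)⁻¹ with hKdef
  set κ := specNorm K with hκdef
  set σy := sigmaMin (UYᵀ * Ass * UY) with hσydef
  set σx := sigmaMin (UXᵀ * Aff * UX) with hσxdef
  set εy := ‖mv (UY * UYᵀ) ys - ys‖ with hεydef
  set εx := ‖mv (UX * UXᵀ) xs - xs‖ with hεxdef
  have hσy0 : 0 ≤ σy := sigmaMin_nonneg _
  have hσx0 : 0 ≤ σx := sigmaMin_nonneg _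
  have hεy0 : 0 ≤ εy := norm_nonneg _
  have hεx0 : 0 ≤ εx := norm_nonneg _
  have hκ0 : 0 ≤ κ := specNorm_nonneg _
  have hAss0 := specNorm_nonneg Ass
  have hAff0 := specNorm_nonneg Aff
  have hAsf0 := specNorm_nonneg Asf
  set a := 1 + specNorm Ass / σy with hadef
  set b := specNorm Asf / σy * (1 + specNorm Aff / σx) with hbdef
  have ha0 : 0 ≤ a := by positivity
  have hb0 : 0 ≤ b := by positivity
  -- bound on the y-term
  have hu : ‖mv (1 - c5 * Ass) (mv (UY * UYᵀ) ys - ys)‖ ≤ a * εy :=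
    norm_mv_one_sub_res UY Ass hUY h5 _
  -- bound on the x-term
  have hw2 : ‖mv (c5 * Asf * (1 - c1 * Aff)) (mv (UX * UXᵀ) xs - xs)‖ ≤ b * εx := by
    have hres5 := specNorm_resolvent_le UY Ass hUY h5
    have e1 : mv (c5 * Asf * (1 - c1 * Aff)) (mv (UX * UXᵀ) xs - xs) =
        mv c5 (mv Asf (mv (1 - c1 * Aff) (mv (UX * UXᵀ) xs - xs))) := by
      rw [mv_mul, mv_mul]
    have h3 : ‖mv (1 - c1 * Aff) (mv (UX * UXᵀ) xs - xs)‖ ≤ (1 + specNorm Aff / σx) * εx :=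
      norm_mv_one_sub_res UX Aff hUX h1 _
    have h4 : ‖mv Asf (mv (1 - c1 * Aff) (mv (UX * UXᵀ) xs - xs))‖ ≤
        specNorm Asf * ((1 + specNorm Aff / σx) * εx) := by
      calc ‖mv Asf (mv (1 - c1 * Aff) (mv (UX * UXᵀ) xs - xs))‖ ≤
          specNorm Asf * ‖mv (1 - c1 * Aff) (mv (UX * UXᵀ) xs - xs)‖ := norm_mv_le _ _
        _ ≤ specNorm Asf * ((1 + specNorm Aff / σx) * εx) :=
          mul_le_mul_of_nonneg_left h3 hAsf0
    rw [e1]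
    calc ‖mv c5 (mv Asf (mv (1 - c1 * Aff) (mv (UX * UXᵀ) xs - xs)))‖ ≤
        specNorm c5 * ‖mv Asf (mv (1 - c1 * Aff) (mv (UX * UXᵀ) xs - xs))‖ := norm_mv_le _ _
      _ ≤ 1 / σy * (specNorm Asf * ((1 + specNorm Aff / σx) * εx)) :=
        mul_le_mul hres5 h4 (norm_nonneg _) (by positivity)
      _ = b * εx := by rw [hbdef]; ring
  have hb1 : ‖yp - ys‖ ≤ κ * (a * εy + b * εx) := by
    rw [hpart1]
    calc ‖mv K (mv (1 - c5 * Ass) (mv (UY * UYᵀ) ys - ys) -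
          mv (c5 * Asf * (1 - c1 * Aff)) (mv (UX * UXᵀ) xs - xs))‖ ≤
        κ * ‖mv (1 - c5 * Ass) (mv (UY * UYᵀ) ys - ys) -
          mv (c5 * Asf * (1 - c1 * Aff)) (mv (UX * UXᵀ) xs - xs)‖ := norm_mv_le _ _
      _ ≤ κ * (a * εy + b * εx) := by
        apply mul_le_mul_of_nonneg_left _ hκ0
        calc ‖mv (1 - c5 * Ass) (mv (UY * UYᵀ) ys - ys) -
            mv (c5 * Asf * (1 - c1 * Aff)) (mv (UX * UXᵀ) xs - xs)‖ ≤
            ‖mv (1 - c5 * Ass) (mv (UY * UYᵀ) ys - ys)‖ +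
              ‖mv (c5 * Asf * (1 - c1 * Aff)) (mv (UX * UXᵀ) xs - xs)‖ := norm_sub_le _ _
          _ ≤ a * εy + b * εx := add_le_add hu hw2
  have hn0 : 0 ≤ ‖yp - ys‖ := norm_nonneg _
  have hsq : ‖yp - ys‖ ^ 2 ≤ (κ * (a * εy + b * εx)) ^ 2 := by
    have := mul_self_le_mul_self hn0 hb1
    nlinarith
  have hfin : ‖yp - ys‖ ^ 2 ≤ 2 * κ ^ 2 * a ^ 2 * εy ^ 2 + 2 * κ ^ 2 * b ^ 2 * εx ^ 2 := by
    nlinarith [hsq, sq_nonneg (κ * (a * εy) - κ * (b * εx))]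
  calc ‖yp - ys‖ ^ 2 ≤ 2 * κ ^ 2 * a ^ 2 * εy ^ 2 + 2 * κ ^ 2 * b ^ 2 * εx ^ 2 := hfin
    _ = 2 * κ ^ 2 * a ^ 2 * εy ^ 2 +
        2 * κ ^ 2 * (specNorm Asf / σy) ^ 2 * (1 + specNorm Aff / σx) ^ 2 * εx ^ 2 := by
      rw [hbdef]; ring

end TTSA
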